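/- Sufficiency direction of the KYP lemma in the time domain (Lemma 1, (1) ⟹ (2)). Let A ∈ ℂ^{n×n}, B ∈ ℂ^{n×p}, C ∈ ℂ^{q×n}, D ∈ ℂ^{q×p} be constant matrices, and let P ∈ ℂ^{n×n} and Π ∈ ℂ^{(q+p)×(q+p)} be Hermitian. Suppose the linear matrix inequality [A B; I 0]^* (Θ ⊗ P) [A B; I 0] + [C D; 0 I]^* Π [C D; 0 I] ⪯ 0 holds, where Θ = [[0,1],[1,0]]. Let x : [0,∞) → ℂⁿ be continuously differentiable with x(0) = 0, let u : [0,∞) → ℂ^p be continuous, assume ẋ(t) = A x(t) + B u(t) for all t ≥ 0, and set y(t) = C x(t) + D u(t). If t ↦ [y(t); u(t)]^* Π [y(t); u(t)] is integrable on [0,∞) and lim_{T→∞} x(T)^* P x(T) exists and is nonnegative, then ∫₀^∞ [y(t); u(t)]^* Π [y(t); u(t)] dt ≤ 0. -/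

import Mathlib

open Matrix MeasureTheory
open scoped ComplexOrder Matrix.Norms.L2Operator

/-- `Ψ ⊗ Q`: the Kronecker product of a `2×2` matrix with an `n×n` matrix,
realized as a `2n × 2n` block matrix. -/
noncomputable def kron2 {n : ℕ} (Ψ : Matrix (Fin 2) (Fin 2) ℂ)
    (Q : Matrix (Fin n) (Fin n) ℂ) : Matrix (Fin n ⊕ Fin n) (Fin n ⊕ Fin n) ℂ :=
  Matrix.fromBlocks (Ψ 0 0 • Q) (Ψ 0 1 • Q) (Ψ 1 0 • Q) (Ψ 1 1 • Q)

/-- The real-valued Hermitian quadratic form `z ↦ z^* H z`. -/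
noncomputable def qf {m : Type*} [Fintype m] (H : Matrix m m ℂ) (z : m → ℂ) : ℝ :=
  (dotProduct (star z) (H.mulVec z)).re

lemma qf_conj {m k : Type*} [Fintype m] [Fintype k] (M : Matrix k m ℂ) (K : Matrix k k ℂ)
    (w : m → ℂ) : qf (Mᴴ * K * M) w = qf K (M *ᵥ w) := by
  unfold qf
  rw [Matrix.star_mulVec, ← Matrix.dotProduct_mulVec, Matrix.mulVec_mulVec,
    Matrix.mulVec_mulVec, Matrix.mul_assoc]

lemma qf_add {m : Type*} [Fintype m] (M N : Matrix m m ℂ) (z : m → ℂ) :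
    qf (M + N) z = qf M z + qf N z := by
  simp [qf, Matrix.add_mulVec, dotProduct_add]

lemma qf_nonpos {m : Type*} [Fintype m] {M : Matrix m m ℂ} (h : Matrix.PosSemidef (-M))
    (z : m → ℂ) : qf M z ≤ 0 := by
  have h2 := (Matrix.posSemidef_iff_dotProduct_mulVec.mp h).2 z
  rw [Matrix.neg_mulVec, dotProduct_neg] at h2
  have : star z ⬝ᵥ M *ᵥ z ≤ 0 := by rwa [← neg_nonneg]
  exact (Complex.le_def.mp this).1

lemma continuousOn_starDot {n m : ℕ} (P : Matrix (Fin n) (Fin m) ℂ) {S : Set ℝ}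
    {a : ℝ → Fin n → ℂ} {b : ℝ → Fin m → ℂ}
    (ha : ContinuousOn a S) (hb : ContinuousOn b S) :
    ContinuousOn (fun t => star (a t) ⬝ᵥ P *ᵥ b t) S := by
  simp only [dotProduct, Matrix.mulVec, Pi.star_apply]
  apply continuousOn_finset_sum
  intro i _
  apply ContinuousOn.mul
  · exact ((continuous_apply i).comp_continuousOn ha).star
  · apply continuousOn_finset_sum
    intro j _
    exact continuousOn_const.mul ((continuous_apply j).comp_continuousOn hb)

lemma hasDerivAt_qf {n : ℕ} (P : Matrix (Fin n) (Fin n) ℂ) {x : ℝ → Fin n → ℂ}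
    {v : Fin n → ℂ} {t : ℝ} (hx : HasDerivAt x v t) :
    HasDerivAt (fun s => qf P (x s))
      ((star v ⬝ᵥ P *ᵥ x t + star (x t) ⬝ᵥ P *ᵥ v).re) t := by
  have hcomp : ∀ i, HasDerivAt (fun s => x s i) (v i) t := fun i =>
    ((ContinuousLinearMap.proj i : (Fin n → ℂ) →L[ℝ] ℂ).hasFDerivAt.comp_hasDerivAt t hx)
  have key : ∀ (a b c d : Fin n → ℂ),
      star a ⬝ᵥ P *ᵥ b + star c ⬝ᵥ P *ᵥ d
        = ∑ i, ∑ j, (star (a i) * (P i j * b j) + star (c i) * (P i j * d j)) := by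
    intro a b c d
    simp [dotProduct, Matrix.mulVec, Finset.mul_sum, Finset.sum_add_distrib]
  have hW : HasDerivAt (fun s => star (x s) ⬝ᵥ P *ᵥ x s)
      (star v ⬝ᵥ P *ᵥ x t + star (x t) ⬝ᵥ P *ᵥ v) t := by
    have hxx : ∀ s, star (x s) ⬝ᵥ P *ᵥ x s
        = ∑ i, ∑ j, star (x s i) * (P i j * x s j) := by
      intro s
      simp [dotProduct, Matrix.mulVec, Finset.mul_sum]
    rw [key]
    simp only [hxx]
    apply HasDerivAt.fun_sum
    intro i _
    apply HasDerivAt.fun_sum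
    intro j _
    exact ((hcomp i).star.mul ((hcomp j).const_mul (P i j)))
  exact (Complex.reCLM.hasFDerivAt.comp_hasDerivAt t hW)

lemma qf_kron2 {n : ℕ} (P : Matrix (Fin n) (Fin n) ℂ) (a b : Fin n → ℂ) :
    qf (kron2 !![0,1;1,0] P) (Sum.elim a b)
      = (star a ⬝ᵥ P *ᵥ b + star b ⬝ᵥ P *ᵥ a).re := by
  unfold qf kron2
  rw [Matrix.fromBlocks_mulVec]
  simp [dotProduct, Fintype.sum_sum_type, Matrix.smul_mulVec]

/-- Sufficiency direction of the KYP lemma in the time domain (Lemma 1, (1) ⟹ (2)). -/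
theorem KYP_sufficiency_time_domain
    {n p q : ℕ}
    (A : Matrix (Fin n) (Fin n) ℂ) (B : Matrix (Fin n) (Fin p) ℂ)
    (C : Matrix (Fin q) (Fin n) ℂ) (D : Matrix (Fin q) (Fin p) ℂ)
    (P : Matrix (Fin n) (Fin n) ℂ) (hP : P.IsHermitian)
    (Pi : Matrix (Fin q ⊕ Fin p) (Fin q ⊕ Fin p) ℂ) (hPi : Pi.IsHermitian)
    -- the KYP linear matrix inequality
    (hLMI : Matrix.PosSemidef
      (-((Matrix.fromBlocks A B (1 : Matrix (Fin n) (Fin n) ℂ) 0)ᴴ * kron2 !![0,1;1,0] P *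
            Matrix.fromBlocks A B (1 : Matrix (Fin n) (Fin n) ℂ) 0 +
          (Matrix.fromBlocks C D 0 (1 : Matrix (Fin p) (Fin p) ℂ))ᴴ * Pi * Matrix.fromBlocks C D 0 (1 : Matrix (Fin p) (Fin p) ℂ))))
    (x : ℝ → Fin n → ℂ) (x' : ℝ → Fin n → ℂ)
    (hx : ∀ t ∈ Set.Ici (0:ℝ), HasDerivAt x (x' t) t)
    (hx'c : ContinuousOn x' (Set.Ici 0))
    (hx0 : x 0 = 0)
    (u : ℝ → Fin p → ℂ) (hu : ContinuousOn u (Set.Ici 0))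
    (hode : ∀ t ∈ Set.Ici (0:ℝ), x' t = A.mulVec (x t) + B.mulVec (u t))
    (y : ℝ → Fin q → ℂ)
    (hy : ∀ t ∈ Set.Ici (0:ℝ), y t = C.mulVec (x t) + D.mulVec (u t))
    (hPerfInt : IntegrableOn (fun t => qf Pi (Sum.elim (y t) (u t))) (Set.Ioi 0))
    (hlim : ∃ L : ℝ, 0 ≤ L ∧
      Filter.Tendsto (fun T => qf P (x T)) Filter.atTop (nhds L)) :
    ∫ t in Set.Ioi (0:ℝ), qf Pi (Sum.elim (y t) (u t)) ≤ 0 := by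
  obtain ⟨L, hL0, hLlim⟩ := hlim
  set f : ℝ → ℝ := fun t => qf Pi (Sum.elim (y t) (u t)) with hfdef
  set g : ℝ → ℝ := fun t => (star (x' t) ⬝ᵥ P *ᵥ x t + star (x t) ⬝ᵥ P *ᵥ x' t).re with hgdef
  have hV : ∀ t ∈ Set.Ici (0:ℝ), HasDerivAt (fun s => qf P (x s)) (g t) t :=
    fun t ht => hasDerivAt_qf P (hx t ht)
  -- pointwise inequality g + f ≤ 0 on [0, ∞)
  have hineq : ∀ t ∈ Set.Ici (0:ℝ), g t + f t ≤ 0 := by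
    intro t ht
    have h1 := qf_nonpos hLMI (Sum.elim (x t) (u t))
    rw [qf_add, qf_conj, qf_conj] at h1
    have hM1 : Matrix.fromBlocks A B 1 0 *ᵥ Sum.elim (x t) (u t) = Sum.elim (x' t) (x t) := by
      rw [Matrix.fromBlocks_mulVec]
      simp [hode t ht]
    have hM2 : Matrix.fromBlocks C D 0 1 *ᵥ Sum.elim (x t) (u t) = Sum.elim (y t) (u t) := by
      rw [Matrix.fromBlocks_mulVec]
      simp [hy t ht]
    rw [hM1, hM2, qf_kron2] at h1
    exact h1
  -- continuity of x and g on [0, ∞)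
  have hxc : ContinuousOn x (Set.Ici 0) :=
    fun t ht => (hx t ht).continuousAt.continuousWithinAt
  have hgc : ContinuousOn g (Set.Ici 0) :=
    Complex.continuous_re.comp_continuousOn
      ((continuousOn_starDot P hx'c hxc).add (continuousOn_starDot P hxc hx'c))
  -- the key finite-horizon bound
  have key : ∀ T : ℝ, 0 ≤ T → ∫ t in (0:ℝ)..T, f t ≤ - qf P (x T) := by
    intro T hT
    have hsub : Set.uIcc (0:ℝ) T ⊆ Set.Ici 0 := by
      rw [Set.uIcc_of_le hT]; exact Set.Icc_subset_Ici_self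
    have hgint : IntervalIntegrable g volume 0 T := (hgc.mono hsub).intervalIntegrable
    have hftc : ∫ t in (0:ℝ)..T, g t = qf P (x T) - qf P (x 0) :=
      intervalIntegral.integral_eq_sub_of_hasDerivAt (fun t ht => hV t (hsub ht)) hgint
    have hfint : IntervalIntegrable f volume 0 T := by
      rw [intervalIntegrable_iff_integrableOn_Ioc_of_le hT]
      exact hPerfInt.mono_set Set.Ioc_subset_Ioi_self
    have hmono : ∫ t in (0:ℝ)..T, f t ≤ ∫ t in (0:ℝ)..T, (-g t) := by
      apply intervalIntegral.integral_mono_on hT hfint hgint.neg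
      intro t ht
      have := hineq t (Set.Icc_subset_Ici_self ht)
      show f t ≤ -(g t)
      linarith
    have hx0q : qf P (x 0) = 0 := by simp [qf, hx0]
    rw [intervalIntegral.integral_neg, hftc, hx0q] at hmono
    linarith
  have h1 : Filter.Tendsto (fun T => ∫ t in (0:ℝ)..T, f t) Filter.atTop
      (nhds (∫ t in Set.Ioi (0:ℝ), f t)) :=
    intervalIntegral_tendsto_integral_Ioi 0 hPerfInt Filter.tendsto_id
  have h2 : Filter.Tendsto (fun T => - qf P (x T)) Filter.atTop (nhds (-L)) := hLlim.neg
  have hle : (∫ t in Set.Ioi (0:ℝ), f t) ≤ -L :=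
    le_of_tendsto_of_tendsto h1 h2 (Filter.eventually_atTop.mpr ⟨0, key⟩)
  linarith
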